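/- Let L be a finite set of n links with nonnegative reals g_{vw} (g_{vv} > 0) and β ≥ 1. Suppose there exist reals x_v ∈ [0,1] and y_{vw} ≥ 0 with y_{vw} ≥ x_v + x_w − 1, satisfying x_v g_{vv} ≥ β Σ_{w ≠ v} y_{vw} g_{vw} for all v, and Σ_v x_v ≥ (1+ε) n/2 for some ε > 0. Define δ_v = max(x_v − 1/2, 0) and L⁺ = {v : δ_v > 0}. Then if R ⊆ L⁺ is a random subset including each v ∈ L⁺ independently with probability δ_v/2, the expected number of links v ∈ R with g_{vv} ≥ β Σ_{w ∈ R \ {v}} g_{vw} is at least ε·n/8. -/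

import Mathlib

open MeasureTheory ProbabilityTheory

/-- Main theorem (expectation bound). Given a fractional SDP solution
`x, y` of value at least `(1+ε)n/2`, sampling each `v ∈ L⁺ = {v : x_v > 1/2}`
independently with probability `δ_v/2` (`δ_v = max(x_v - 1/2, 0)`) yields, in
expectation, at least `ε n / 8` sampled links that are feasible in the sample. -/
theorem stmt8 {Ω : Type*} [MeasureSpace Ω] [IsProbabilityMeasure (ℙ : Measure Ω)]
    {ι : Type*} [DecidableEq ι] (L : Finset ι) (n : ℕ) (hn : L.card = n)
    (g : ι → ι → ℝ) (hg : ∀ v w, 0 ≤ g v w) (hgvv : ∀ v ∈ L, 0 < g v v)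
    (β : ℝ) (hβ : 1 ≤ β)
    (x : ι → ℝ) (hx : ∀ v ∈ L, x v ∈ Set.Icc (0 : ℝ) 1)
    (y : ι → ι → ℝ) (hy0 : ∀ v w, 0 ≤ y v w)
    (hy1 : ∀ v ∈ L, ∀ w ∈ L, x v + x w - 1 ≤ y v w)
    (hsdp : ∀ v ∈ L, β * ∑ w ∈ L.erase v, y v w * g v w ≤ x v * g v v)
    (ε : ℝ) (hε : 0 < ε)
    (hval : (1 + ε) * n / 2 ≤ ∑ v ∈ L, x v)
    (δ : ι → ℝ) (hδ : ∀ v, δ v = max (x v - 1 / 2) 0)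
    (Lp : Finset ι) (hLp : Lp = L.filter (fun v => 0 < δ v))
    (X : ι → Ω → ℝ) (hmeas : ∀ v, Measurable (X v))
    (hBer : ∀ v ∈ Lp, ∀ ω, X v ω = 0 ∨ X v ω = 1)
    (hind : iIndepFun X ℙ)
    (hp : ∀ v ∈ Lp, (ℙ {ω | X v ω = 1}).toReal = δ v / 2) :
    ε * n / 8 ≤
      ∫ ω, ∑ v ∈ Lp, (if X v ω = 1 ∧
        β * ∑ w ∈ Lp.erase v, g v w * X w ω ≤ g v v then (1 : ℝ) else 0) := by
  classical
  have hLpL : Lp ⊆ L := by rw [hLp]; exact Finset.filter_subset _ _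
  have hδnn : ∀ w, 0 ≤ δ w := fun w => by rw [hδ]; exact le_max_right _ _
  have hδLp : ∀ w ∈ Lp, δ w = x w - 1 / 2 := by
    intro w hw
    rw [hLp] at hw
    obtain ⟨hwL, hwpos⟩ := Finset.mem_filter.1 hw
    have hpos : 0 ≤ x w - 1 / 2 := by
      by_contra h
      push_neg at h
      rw [hδ, max_eq_right h.le] at hwpos
      exact lt_irrefl 0 hwpos
    rw [hδ]
    exact max_eq_left hpos
  have hβ0 : (0:ℝ) < β := lt_of_lt_of_le one_pos hβ
  -- bounded Bernoulli variables are integrable with mean δ w / 2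
  have hXnn : ∀ w ∈ Lp, ∀ ω, 0 ≤ X w ω := by
    intro w hw ω; rcases hBer w hw ω with h | h <;> simp [h]
  have hXint : ∀ w ∈ Lp, Integrable (X w) ℙ := by
    intro w hw
    refine Integrable.mono' (integrable_const 1) (hmeas w).aestronglyMeasurable ?_
    filter_upwards with ω
    rcases hBer w hw ω with h | h <;> simp [h]
  have hXexp : ∀ w ∈ Lp, ∫ ω, X w ω = δ w / 2 := by
    intro w hw
    have hEq : X w = Set.indicator {ω | X w ω = 1} (fun _ => (1 : ℝ)) := by
      funext ω
      rcases hBer w hw ω with h | h <;> simp [Set.indicator, h]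
    have hms : MeasurableSet {ω | X w ω = 1} :=
      (hmeas w) (measurableSet_singleton 1)
    rw [hEq, integral_indicator_const _ hms, smul_eq_mul, mul_one, measureReal_def, hp w hw]
  -- the indicator sets
  set E : ι → Set Ω := fun v =>
    (X v ⁻¹' {1}) ∩ ((fun ω => β * ∑ w ∈ Lp.erase v, g v w * X w ω) ⁻¹' Set.Iic (g v v))
    with hEdef
  have hSmeas : ∀ v, Measurable (fun ω => β * ∑ w ∈ Lp.erase v, g v w * X w ω) :=
    fun v => measurable_const.mul
      (Finset.measurable_sum _ fun w _ => measurable_const.mul (hmeas w))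
  have hEmeas : ∀ v, MeasurableSet (E v) := fun v =>
    ((hmeas v) (measurableSet_singleton 1)).inter ((hSmeas v) measurableSet_Iic)
  have hEind : ∀ v, (fun ω => if X v ω = 1 ∧
      β * ∑ w ∈ Lp.erase v, g v w * X w ω ≤ g v v then (1 : ℝ) else 0)
      = Set.indicator (E v) (fun _ => (1:ℝ)) := by
    intro v
    funext ω
    simp [hEdef, Set.indicator_apply, Set.mem_inter_iff]
  have hEint : ∀ v, Integrable (fun ω => if X v ω = 1 ∧
      β * ∑ w ∈ Lp.erase v, g v w * X w ω ≤ g v v then (1 : ℝ) else 0) ℙ := by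
    intro v
    rw [hEind v]
    exact (integrable_const 1).indicator (hEmeas v)
  -- the key per-link bound
  have key : ∀ v ∈ Lp, δ v / 4 ≤
      ∫ ω, (if X v ω = 1 ∧
        β * ∑ w ∈ Lp.erase v, g v w * X w ω ≤ g v v then (1 : ℝ) else 0) := by
    intro v hv
    have hvL : v ∈ L := hLpL hv
    have hgv : 0 < g v v := hgvv v hvL
    -- independence of the sampled load and the sampling of v
    set φ : ι → ℝ → ℝ := fun w t => if w = v then t else β * g v w * t with hφdef
    have hφ : ∀ w, Measurable (φ w) := by
      intro w
      by_cases h : w = v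
      · subst h; simpa [hφdef] using measurable_id'
      · simp only [hφdef, if_neg h]
        exact measurable_const.mul measurable_id
    have hindY : iIndepFun (fun w => φ w ∘ X w) ℙ :=
      hind.comp φ hφ
    have hYmeas : ∀ w, Measurable (φ w ∘ X w) := fun w => (hφ w).comp (hmeas w)
    have hIndep : IndepFun (∑ w ∈ Lp.erase v, φ w ∘ X w) (φ v ∘ X v) ℙ :=
      hindY.indepFun_finsetSum_of_notMem hYmeas (Finset.notMem_erase v Lp)
    have hSsum : (∑ w ∈ Lp.erase v, φ w ∘ X w)
        = (fun ω => β * ∑ w ∈ Lp.erase v, g v w * X w ω) := by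
      funext ω
      simp only [Finset.sum_apply, Function.comp_apply, Finset.mul_sum]
      refine Finset.sum_congr rfl fun w hw => ?_
      have hwv : w ≠ v := Finset.ne_of_mem_erase hw
      simp [hφdef, hwv]; ring
    have hφv : (φ v ∘ X v) = X v := by funext ω; simp [hφdef]
    rw [hSsum, hφv] at hIndep
    -- expectation of the sampled load
    have hSint : Integrable (fun ω => β * ∑ w ∈ Lp.erase v, g v w * X w ω) ℙ := by
      refine Integrable.const_mul ?_ β
      exact integrable_finset_sum _ fun w hw =>
        ((hXint w (Finset.mem_of_mem_erase hw)).const_mul _)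
    have hSexp : (∫ ω, β * ∑ w ∈ Lp.erase v, g v w * X w ω)
        = β * ∑ w ∈ Lp.erase v, g v w * (δ w / 2) := by
      rw [integral_const_mul, integral_finset_sum _
        (fun w hw => (hXint w (Finset.mem_of_mem_erase hw)).const_mul _)]
      congr 1
      refine Finset.sum_congr rfl fun w hw => ?_
      rw [integral_const_mul, hXexp w (Finset.mem_of_mem_erase hw)]
    -- SDP bound:  E S ≤ g v v / 2
    have hES : (∫ ω, β * ∑ w ∈ Lp.erase v, g v w * X w ω) ≤ g v v / 2 := by
      rw [hSexp]
      have step1 : ∑ w ∈ Lp.erase v, g v w * (δ w / 2)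
          ≤ ∑ w ∈ Lp.erase v, 1/2 * (y v w * g v w) := by
        refine Finset.sum_le_sum fun w hw => ?_
        have hwLp : w ∈ Lp := Finset.mem_of_mem_erase hw
        have hyd : δ w ≤ y v w := by
          have h1 := hy1 v hvL w (hLpL hwLp)
          have h2 := hδLp v hv
          have h3 := hδLp w hwLp
          have h4 := hδnn v
          nlinarith
        nlinarith [hg v w, hδnn w]
      have step2 : ∑ w ∈ Lp.erase v, 1/2 * (y v w * g v w)
          ≤ ∑ w ∈ L.erase v, 1/2 * (y v w * g v w) := by
        refine Finset.sum_le_sum_of_subset_of_nonneg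
          (Finset.erase_subset_erase v hLpL) fun w _ _ => ?_
        exact mul_nonneg (by norm_num) (mul_nonneg (hy0 v w) (hg v w))
      have hSDP := hsdp v hvL
      have hx1 : x v ≤ 1 := (hx v hvL).2
      calc β * ∑ w ∈ Lp.erase v, g v w * (δ w / 2)
          ≤ β * ∑ w ∈ L.erase v, 1/2 * (y v w * g v w) := by
            exact mul_le_mul_of_nonneg_left (step1.trans step2) hβ0.le
        _ = 1/2 * (β * ∑ w ∈ L.erase v, y v w * g v w) := by
            rw [← Finset.mul_sum]; ring
        _ ≤ 1/2 * (x v * g v v) := by linarith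
        _ ≤ g v v / 2 := by nlinarith
    -- Markov's inequality
    have hSnn : ∀ ω, 0 ≤ β * ∑ w ∈ Lp.erase v, g v w * X w ω := by
      intro ω
      refine mul_nonneg hβ0.le (Finset.sum_nonneg fun w hw => ?_)
      exact mul_nonneg (hg v w) (hXnn w (Finset.mem_of_mem_erase hw) ω)
    have hMar := mul_meas_ge_le_integral_of_nonneg
      (ae_of_all _ hSnn) hSint (g v v)
    have hMar2 : (ℙ {ω | g v v ≤ β * ∑ w ∈ Lp.erase v, g v w * X w ω}).toReal ≤ 1/2 := by
      have h := hMar.trans hES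
      have h2 : g v v * (ℙ {ω | g v v ≤ β * ∑ w ∈ Lp.erase v, g v w * X w ω}).toReal
          ≤ g v v * (1/2) := by rw [measureReal_def] at h; linarith
      exact le_of_mul_le_mul_left h2 hgv
    -- probability of the event B
    set B : Set Ω := (fun ω => β * ∑ w ∈ Lp.erase v, g v w * X w ω) ⁻¹' Set.Iic (g v v)
      with hBdef
    have hBmeas : MeasurableSet B := (hSmeas v) measurableSet_Iic
    have hBc : Bᶜ ⊆ {ω | g v v ≤ β * ∑ w ∈ Lp.erase v, g v w * X w ω} := by
      intro ω hω
      simp only [hBdef, Set.mem_compl_iff, Set.mem_preimage, Set.mem_Iic, not_le] at hω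
      exact le_of_lt hω
    have hBcle : (ℙ Bᶜ).toReal ≤ 1/2 := by
      refine le_trans ?_ hMar2
      exact ENNReal.toReal_mono (measure_ne_top _ _) (measure_mono hBc)
    have hBge : 1/2 ≤ (ℙ B).toReal := by
      have hsum : (ℙ B).toReal + (ℙ Bᶜ).toReal = 1 := by
        rw [← ENNReal.toReal_add (measure_ne_top _ _) (measure_ne_top _ _),
          measure_add_measure_compl hBmeas, measure_univ, ENNReal.toReal_one]
      linarith
    -- combine via independence
    have hprod := hIndep.measure_inter_preimage_eq_mul (Set.Iic (g v v)) {1}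
      measurableSet_Iic (measurableSet_singleton (1:ℝ))
    have hEeq : E v = B ∩ (X v ⁻¹' {1}) := by
      rw [hEdef, hBdef, Set.inter_comm]
    rw [hEind v, integral_indicator_const _ (hEmeas v), smul_eq_mul, mul_one, measureReal_def, hEeq, hprod,
      ENNReal.toReal_mul]
    have hpv : (ℙ (X v ⁻¹' {1})).toReal = δ v / 2 := by
      have : X v ⁻¹' {1} = {ω | X v ω = 1} := by ext ω; simp [Set.mem_preimage]
      rw [this]; exact hp v hv
    rw [hpv]
    have := hδnn v
    calc δ v / 4 = (1/2) * (δ v / 2) := by ring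
      _ ≤ (ℙ B).toReal * (δ v / 2) := by
          apply mul_le_mul_of_nonneg_right hBge; linarith
  -- sum the per-link bounds
  have hsumδ : ε * n / 2 ≤ ∑ v ∈ Lp, δ v := by
    have h1 : ∑ v ∈ Lp, δ v = ∑ v ∈ L, δ v := by
      refine Finset.sum_subset hLpL fun w hwL hwn => ?_
      rw [hLp, Finset.mem_filter, not_and] at hwn
      have := hwn hwL
      have := hδnn w
      linarith
    have h2 : ∑ v ∈ L, (x v - 1/2) ≤ ∑ v ∈ L, δ v := by
      refine Finset.sum_le_sum fun w _ => ?_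
      rw [hδ]; exact le_max_left _ _
    have h3 : ∑ v ∈ L, (x v - 1/2) = (∑ v ∈ L, x v) - n/2 := by
      rw [Finset.sum_sub_distrib, Finset.sum_const, hn]
      push_cast
      ring
    rw [h1]
    have : ε * n / 2 ≤ (∑ v ∈ L, x v) - n/2 := by
      have hn0 : (0:ℝ) ≤ n := Nat.cast_nonneg n
      nlinarith
    linarith
  rw [integral_finset_sum _ fun v _ => hEint v]
  have := Finset.sum_le_sum key
  calc ε * n / 8 = (ε * n / 2) / 4 := by ring
    _ ≤ (∑ v ∈ Lp, δ v) / 4 := by linarith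
    _ = ∑ v ∈ Lp, δ v / 4 := by rw [Finset.sum_div]
    _ ≤ _ := Finset.sum_le_sum key
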